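/- Radical parallelism on the projective line over a ring R is the equality relation if and only if the Jacobson radical of R is zero. -/
import Mathlib
open Matrix
/-- A pair `(a, b)` is admissible if it is the first row of an invertible 2×2 matrix. -/
def Admissible {R : Type*} [Ring R] (a b : R) : Prop :=
  ∃ M : Matrix (Fin 2) (Fin 2) R, IsUnit M ∧ M 0 0 = a ∧ M 0 1 = b

/-- The point `R(a,b)` of the projective line over `R`. -/
def pt (R : Type*) [Ring R] (a b : R) : Submodule R (Fin 2 → R) :=
  Submodule.span R {![a, b]}

/-- The projective line over `R`. -/
def ProjLine (R : Type*) [Ring R] : Set (Submodule R (Fin 2 → R)) :=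
  {p | ∃ a b : R, Admissible a b ∧ p = pt R a b}

/-- Two points are distant iff representing admissible pairs form an invertible matrix. -/
def Distant {R : Type*} [Ring R] (p q : Submodule R (Fin 2 → R)) : Prop :=
  ∃ a b c d : R, p = pt R a b ∧ q = pt R c d ∧ IsUnit (!![a, b; c, d])

/-- `p` is radically parallel to `q`: every point distant to `p` is distant to `q`. -/
def RadParallel {R : Type*} [Ring R] (p q : Submodule R (Fin 2 → R)) : Prop :=
  ∀ x ∈ ProjLine R, Distant x p → Distant x q


section Helpers
variable {R : Type*} [Ring R]

lemma isUnit_of_mul_eq_one'' {M : Type*} [Monoid M] (a b : M) (h1 : a*b = 1) (h2 : b*a = 1) :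
    IsUnit a := ⟨⟨a, b, h1, h2⟩, rfl⟩

lemma isUnit_one_add_mul_swap {a b : R} (h : IsUnit (1 + a*b)) : IsUnit (1 + b*a) := by
  obtain ⟨u, hu⟩ := h
  set c : R := ↑u⁻¹ with hc
  have h1 : (1 + a*b) * c = 1 := by rw [← hu, hc]; exact u.mul_inv
  have h2 : c * (1 + a*b) = 1 := by rw [← hu, hc]; exact u.inv_mul
  refine isUnit_of_mul_eq_one'' _ (1 - b*c*a) ?_ ?_
  · have e : (1 + b*a) * (1 - b*c*a) = 1 + b*a - b*((1+a*b)*c)*a := by noncomm_ring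
    rw [e, h1]; noncomm_ring
  · have e : (1 - b*c*a) * (1 + b*a) = 1 + b*a - b*(c*(1+a*b))*a := by noncomm_ring
    rw [e, h2]; noncomm_ring

lemma isUnit_add_one_of_mem_jac {a : R} (h : a ∈ (⊥ : Ideal R).jacobson) : IsUnit (a + 1) := by
  obtain ⟨z, hz⟩ := Ideal.mem_jacobson_iff.mp h 1
  rw [Ideal.mem_bot] at hz
  have hz1 : z * (a + 1) = 1 := by
    have : z * (a+1) = (z*1*a + z - 1) + 1 := by noncomm_ring
    rw [this, hz, zero_add]
  have hmem : -(z*a) ∈ (⊥ : Ideal R).jacobson :=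
    ((⊥:Ideal R).jacobson.neg_mem (Ideal.mul_mem_left _ z h))
  obtain ⟨w, hw⟩ := Ideal.mem_jacobson_iff.mp hmem 1
  rw [Ideal.mem_bot] at hw
  have hzeq : -(z*a) + 1 = z := by
    have h' : z*a + z = 1 := by
      have e : z*a + z = z*(a+1) := by noncomm_ring
      rw [e, hz1]
    rw [← h']; abel
  have hwz : w * z = 1 := by
    rw [← hzeq]
    have : w * (-(z*a) + 1) = (w*1*(-(z*a)) + w - 1) + 1 := by noncomm_ring
    rw [this, hw, zero_add]
  have hwe : w = a + 1 := by
    calc w = w * (z*(a+1)) := by rw [hz1, mul_one]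
    _ = (w*z)*(a+1) := by rw [mul_assoc]
    _ = a + 1 := by rw [hwz, one_mul]
  exact isUnit_of_mul_eq_one'' _ z (by rw [← hwe]; exact hwz) hz1

lemma Admissible.exists_right_inv {a b : R} (h : Admissible a b) : ∃ x y, a*x + b*y = 1 := by
  obtain ⟨M, hM, ha, hb⟩ := h
  obtain ⟨U, hU⟩ := hM
  have h1 : M * U.inv = 1 := by rw [← hU]; exact U.mul_inv
  refine ⟨U.inv 0 0, U.inv 1 0, ?_⟩
  have h00 : (M * U.inv) 0 0 = (1 : Matrix (Fin 2) (Fin 2) R) 0 0 := by rw [h1]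
  rw [Matrix.mul_apply, Fin.sum_univ_two, ha, hb, Matrix.one_apply_eq] at h00
  exact h00

lemma pt_eq_unit {a b c d : R} (hab : Admissible a b) (hcd : Admissible c d)
    (h : pt R a b = pt R c d) : ∃ u : R, IsUnit u ∧ c = u*a ∧ d = u*b := by
  have hc : (![c, d] : Fin 2 → R) ∈ pt R a b := by
    rw [h]; exact Submodule.mem_span_singleton_self _
  have ha : (![a, b] : Fin 2 → R) ∈ pt R c d := by
    rw [← h]; exact Submodule.mem_span_singleton_self _
  obtain ⟨u, hu⟩ := Submodule.mem_span_singleton.mp hc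
  obtain ⟨v, hv⟩ := Submodule.mem_span_singleton.mp ha
  have hc0 : c = u * a := by have := congrFun hu 0; simpa using this.symm
  have hc1 : d = u * b := by have := congrFun hu 1; simpa using this.symm
  have ha0 : a = v * c := by have := congrFun hv 0; simpa using this.symm
  have ha1 : b = v * d := by have := congrFun hv 1; simpa using this.symm
  obtain ⟨x, y, hxy⟩ := hab.exists_right_inv
  obtain ⟨x', y', hxy'⟩ := hcd.exists_right_inv
  have hvu : v * u = 1 := by
    calc v * u = v*u*(a*x + b*y) := by rw [hxy, mul_one]
    _ = (v*(u*a))*x + (v*(u*b))*y := by noncomm_ring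
    _ = a*x + b*y := by rw [← hc0, ← hc1, ← ha0, ← ha1]
    _ = 1 := hxy
  have huv : u * v = 1 := by
    calc u * v = u*v*(c*x' + d*y') := by rw [hxy', mul_one]
    _ = (u*(v*c))*x' + (u*(v*d))*y' := by noncomm_ring
    _ = c*x' + d*y' := by rw [← ha0, ← ha1, ← hc0, ← hc1]
    _ = 1 := hxy'
  exact ⟨u, isUnit_of_mul_eq_one'' u v huv hvu, hc0, hc1⟩

lemma pt_unit_mul {g a b : R} (hg : IsUnit g) : pt R (g*a) (g*b) = pt R a b := by
  have : (![g*a, g*b] : Fin 2 → R) = g • ![a, b] := by funext i; fin_cases i <;> simp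
  rw [pt, this, Submodule.span_singleton_smul_eq hg]; rfl

lemma isUnit_row_mul {u v a b c d : R} (hu : IsUnit u) (hv : IsUnit v)
    (h : IsUnit !![a,b;c,d]) : IsUnit !![u*a, u*b; v*c, v*d] := by
  obtain ⟨U, hU⟩ := hu
  obtain ⟨V, hV⟩ := hv
  have hd : IsUnit !![(u:R), 0; 0, v] := by
    refine isUnit_of_mul_eq_one'' _ !![(↑U⁻¹:R), 0; 0, ↑V⁻¹] ?_ ?_ <;>
      rw [Matrix.mul_fin_two, Matrix.one_fin_two] <;>
      simp [← hU, ← hV, U.mul_inv, V.mul_inv, U.inv_mul, V.inv_mul]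
  have e : !![u*a, u*b; v*c, v*d] = !![(u:R), 0; 0, v] * !![a,b;c,d] := by
    rw [Matrix.mul_fin_two]; simp
  rw [e]; exact hd.mul h

lemma isUnit_of_antidiag {s : R} (h : IsUnit !![(0:R), 1; s, 0]) : IsUnit s := by
  obtain ⟨U, hU⟩ := h
  set K := U.inv with hK
  have h1 : !![(0:R),1;s,0] * K = 1 := by rw [← hU, hK]; exact U.mul_inv
  have h2 : K * !![(0:R),1;s,0] = 1 := by rw [← hU, hK]; exact U.inv_mul
  have e1 : s * K 0 1 = 1 := by
    have h' : (!![(0:R),1;s,0] * K) 1 1 = (1 : Matrix (Fin 2) (Fin 2) R) 1 1 := by rw [h1]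
    rw [Matrix.mul_apply, Fin.sum_univ_two, Matrix.one_apply_eq] at h'
    simpa using h'
  have e2 : K 0 1 * s = 1 := by
    have h' : (K * !![(0:R),1;s,0]) 0 0 = (1 : Matrix (Fin 2) (Fin 2) R) 0 0 := by rw [h2]
    rw [Matrix.mul_apply, Fin.sum_univ_two, Matrix.one_apply_eq] at h'
    simpa using h'
  exact isUnit_of_mul_eq_one'' _ _ e1 e2

end Helpers
section Helpers2
variable {R : Type*} [Ring R]

lemma matrix_eq_one_tac {A B : Matrix (Fin 2) (Fin 2) R} (h1 : A * B = 1) (h2 : B * A = 1) :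
    IsUnit A := isUnit_of_mul_eq_one'' _ _ h1 h2

lemma isUnit_lowtri (x : R) : IsUnit !![(1:R), 0; x, 1] := by
  refine matrix_eq_one_tac (B := !![(1:R),0;-x,1]) ?_ ?_ <;>
    · ext i j
      fin_cases i <;> fin_cases j <;>
        simp [Matrix.mul_apply, Fin.sum_univ_two, Matrix.one_apply]

lemma isUnit_uptri {s : R} (r : R) (hs : IsUnit s) : IsUnit !![(1:R), r; 0, s] := by
  obtain ⟨S, hS⟩ := hs
  refine matrix_eq_one_tac (B := !![(1:R), -(r * ↑S⁻¹); 0, ↑S⁻¹]) ?_ ?_ <;>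
    · ext i j
      fin_cases i <;> fin_cases j <;>
        simp [Matrix.mul_apply, Fin.sum_univ_two, Matrix.one_apply, ← hS, mul_assoc,
          ← mul_assoc]

lemma isUnit_swap : IsUnit !![(0:R), 1; 1, 0] := by
  refine matrix_eq_one_tac (B := !![(0:R),1;1,0]) ?_ ?_ <;>
    · ext i j
      fin_cases i <;> fin_cases j <;>
        simp [Matrix.mul_apply, Fin.sum_univ_two, Matrix.one_apply]

lemma isUnit_tone (t : R) : IsUnit !![t, 1; 1, 0] := by
  refine matrix_eq_one_tac (B := !![(0:R),1;1,-t]) ?_ ?_ <;>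
    · ext i j
      fin_cases i <;> fin_cases j <;>
        simp [Matrix.mul_apply, Fin.sum_univ_two, Matrix.one_apply]

lemma isUnit_of_antidiag' {s : R} (h : IsUnit !![(0:R), s; 1, 0]) : IsUnit s := by
  obtain ⟨U, hU⟩ := h
  set K := U.inv with hK
  have h1 : !![(0:R),s;1,0] * K = 1 := by rw [← hU, hK]; exact U.mul_inv
  have h2 : K * !![(0:R),s;1,0] = 1 := by rw [← hU, hK]; exact U.inv_mul
  have e1 : s * K 1 0 = 1 := by
    have h' : (!![(0:R),s;1,0] * K) 0 0 = (1 : Matrix (Fin 2) (Fin 2) R) 0 0 := by rw [h1]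
    rw [Matrix.mul_apply, Fin.sum_univ_two, Matrix.one_apply_eq] at h'
    simpa using h'
  have e2 : K 1 0 * s = 1 := by
    have h' : (K * !![(0:R),s;1,0]) 1 1 = (1 : Matrix (Fin 2) (Fin 2) R) 1 1 := by rw [h2]
    rw [Matrix.mul_apply, Fin.sum_univ_two, Matrix.one_apply_eq] at h'
    simpa using h'
  exact isUnit_of_mul_eq_one'' _ _ e1 e2

lemma admissible_of_row0 {a b c d : R} (h : IsUnit !![a,b;c,d]) : Admissible a b :=
  ⟨_, h, by simp, by simp⟩

lemma admissible_of_row1 {a b c d : R} (h : IsUnit !![a,b;c,d]) : Admissible c d := by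
  refine ⟨!![c,d;a,b], ?_, by simp, by simp⟩
  have e : !![c,d;a,b] = !![(0:R),1;1,0] * !![a,b;c,d] := by
    ext i j
    fin_cases i <;> fin_cases j <;> simp [Matrix.mul_apply, Fin.sum_univ_two]
  rw [e]; exact isUnit_swap.mul h

lemma unit_cancel {u : Rˣ} (x : R) : (↑u⁻¹ : R) * (↑u * x) = x := by
  rw [← mul_assoc, u.inv_mul, one_mul]

end Helpers2
/-- Radical parallelism is the equality relation on `P(R)` iff the Jacobson radical
of `R` is zero. -/
theorem radParallel_eq_equality_iff (R : Type*) [Ring R] [Nontrivial R] :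
    (∀ p ∈ ProjLine R, ∀ q ∈ ProjLine R, (RadParallel p q ↔ p = q)) ↔
      (⊥ : Ideal R).jacobson = ⊥ := by
  constructor
  · intro H
    refine le_antisymm (fun r hr => ?_) bot_le
    rw [Ideal.mem_bot]
    have hone : IsUnit (!![(1:R),0;0,1]) := by rw [← Matrix.one_fin_two]; exact isUnit_one
    have h10 : Admissible (1:R) 0 := ⟨!![(1:R),0;0,1], hone, by simp, by simp⟩
    have hp : pt R 1 0 ∈ ProjLine R := ⟨1, 0, h10, rfl⟩
    have hqU : IsUnit !![(1:R), r; 0, 1] := isUnit_uptri r isUnit_one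
    have hq : pt R 1 r ∈ ProjLine R := ⟨1, r, ⟨!![(1:R),r;0,1], hqU, by simp, by simp⟩, rfl⟩
    have hpar : RadParallel (pt R 1 0) (pt R 1 r) := by
      intro x hx hdist
      obtain ⟨a, b, c, d, hx1, hp1, hU⟩ := hdist
      have hcd : Admissible c d := admissible_of_row1 hU
      obtain ⟨u, hu, hc, hd⟩ := pt_eq_unit h10 hcd hp1
      rw [mul_one] at hc
      rw [mul_zero] at hd
      rw [hc, hd] at hU
      obtain ⟨Uu, hUu⟩ := hu
      have h3 : IsUnit !![(1:R)*a, 1*b; (↑Uu⁻¹:R)*u, (↑Uu⁻¹:R)*0] :=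
        isUnit_row_mul isUnit_one (Units.isUnit Uu⁻¹) hU
      have h4 : IsUnit !![a, b; (1:R), 0] := by
        have e : (↑Uu⁻¹:R) * u = 1 := by rw [← hUu]; exact Uu.inv_mul
        simpa [e] using h3
      have h5 : IsUnit (!![(1:R), -a; 0, 1] * !![a, b; 1, 0]) :=
        (isUnit_uptri (-a) isUnit_one).mul h4
      have e5 : !![(1:R), -a; 0, 1] * !![a, b; 1, 0] = !![(0:R), b; 1, 0] := by
        ext i j
        fin_cases i <;> fin_cases j <;> simp [Matrix.mul_apply, Fin.sum_univ_two]
      have hb : IsUnit b := isUnit_of_antidiag' (e5 ▸ h5)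
      obtain ⟨B, hB⟩ := hb
      have hmem : -(B.inv * a * r) ∈ (⊥:Ideal R).jacobson :=
        neg_mem (Ideal.mul_mem_left _ _ hr)
      have hs1 : IsUnit (-(B.inv * a * r) + 1) := isUnit_add_one_of_mem_jac hmem
      have hbb : b * B.inv = 1 := by rw [← hB]; exact B.mul_inv
      have hsval : b * (-(B.inv * a * r) + 1) = b - a*r := by
        have e : b * (-(B.inv * a * r) + 1) = -((b * B.inv) * (a * r)) + b := by noncomm_ring
        rw [e, hbb]; noncomm_ring
      have hb' : IsUnit b := ⟨B, hB⟩
      have hs : IsUnit (b - a*r) := hsval ▸ hb'.mul hs1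
      have h6 : IsUnit (!![(1:R), 0; a, 1] * !![(1:R), r; 0, b - a*r]) :=
        (isUnit_lowtri a).mul (isUnit_uptri r hs)
      have e6 : !![(1:R), 0; a, 1] * !![(1:R), r; 0, b - a*r] = !![(1:R), r; a, b] := by
        ext i j
        fin_cases i <;> fin_cases j <;>
          simp [Matrix.mul_apply, Fin.sum_univ_two] <;> noncomm_ring
      have h7 : IsUnit (!![(0:R), 1; 1, 0] * !![(1:R), r; a, b]) := isUnit_swap.mul (e6 ▸ h6)
      have e7 : !![(0:R), 1; 1, 0] * !![(1:R), r; a, b] = !![a, b; (1:R), r] := by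
        ext i j
        fin_cases i <;> fin_cases j <;> simp [Matrix.mul_apply, Fin.sum_univ_two]
      exact ⟨a, b, 1, r, hx1, rfl, e7 ▸ h7⟩
    have heq := (H _ hp _ hq).mp hpar
    have hmem2 : (![1, r] : Fin 2 → R) ∈ pt R 1 0 := by
      rw [heq]; exact Submodule.mem_span_singleton_self _
    obtain ⟨s, hs⟩ := Submodule.mem_span_singleton.mp hmem2
    have := congrFun hs 1
    simpa using this.symm
  · intro hJ p hp q hq
    constructor
    · intro hpar
      obtain ⟨a, b, hab, rfl⟩ := hp
      obtain ⟨e, f, hef, rfl⟩ := hq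
      obtain ⟨M, hM, hMa, hMb⟩ := hab
      obtain ⟨U, hU⟩ := hM
      have hMeta : M = !![a, b; M 1 0, M 1 1] := by
        conv_lhs => rw [Matrix.eta_fin_two M]
        rw [hMa, hMb]
      set c := M 1 0 with hcdef
      set d := M 1 1 with hddef
      set N := U.inv with hNdef
      have hNu : IsUnit N := by rw [hNdef]; exact Units.isUnit U⁻¹
      have hMN : M * N = 1 := by rw [← hU]; exact U.mul_inv
      have hNM : N * M = 1 := by rw [← hU]; exact U.inv_mul
      rw [hMeta] at hMN hNM
      set g := e * N 0 0 + f * N 1 0 with hgdef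
      set h := e * N 0 1 + f * N 1 1 with hhdef
      have k00 : N 0 0 * a + N 0 1 * c = 1 := by
        have h' : (N * !![a,b;c,d]) 0 0 = (1 : Matrix (Fin 2) (Fin 2) R) 0 0 := by rw [hNM]
        rw [Matrix.mul_apply, Fin.sum_univ_two, Matrix.one_apply_eq] at h'
        simpa using h'
      have k10 : N 1 0 * a + N 1 1 * c = 0 := by
        have h' : (N * !![a,b;c,d]) 1 0 = (1 : Matrix (Fin 2) (Fin 2) R) 1 0 := by rw [hNM]
        rw [Matrix.mul_apply, Fin.sum_univ_two] at h'
        simpa [Matrix.one_apply] using h'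
      have k01 : N 0 0 * b + N 0 1 * d = 0 := by
        have h' : (N * !![a,b;c,d]) 0 1 = (1 : Matrix (Fin 2) (Fin 2) R) 0 1 := by rw [hNM]
        rw [Matrix.mul_apply, Fin.sum_univ_two] at h'
        simpa [Matrix.one_apply] using h'
      have k11 : N 1 0 * b + N 1 1 * d = 1 := by
        have h' : (N * !![a,b;c,d]) 1 1 = (1 : Matrix (Fin 2) (Fin 2) R) 1 1 := by rw [hNM]
        rw [Matrix.mul_apply, Fin.sum_univ_two, Matrix.one_apply_eq] at h'
        simpa using h'
      have hea : g * a + h * c = e := by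
        calc g * a + h * c
            = e*(N 0 0 * a + N 0 1 * c) + f*(N 1 0 * a + N 1 1 * c) := by
              rw [hgdef, hhdef]; noncomm_ring
          _ = e := by rw [k00, k10]; simp
      have hfb : g * b + h * d = f := by
        calc g * b + h * d
            = e*(N 0 0 * b + N 0 1 * d) + f*(N 1 0 * b + N 1 1 * d) := by
              rw [hgdef, hhdef]; noncomm_ring
          _ = f := by rw [k01, k11]; simp
      have key : ∀ t : R, IsUnit !![t, (1:R); g, h] := by
        intro t
        have hAt : IsUnit (!![t, (1:R); 1, 0] * M) := (isUnit_tone t).mul ⟨U, hU⟩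
        have hAeq : !![t, (1:R); 1, 0] * M = !![t*a + c, t*b + d; a, b] := by
          rw [hMeta]
          ext i j
          fin_cases i <;> fin_cases j <;> simp [Matrix.mul_apply, Fin.sum_univ_two]
        have hAU : IsUnit !![t*a + c, t*b + d; a, b] := hAeq ▸ hAt
        have hadm : Admissible (t*a + c) (t*b + d) := admissible_of_row0 hAU
        have hxP : pt R (t*a+c) (t*b+d) ∈ ProjLine R := ⟨_, _, hadm, rfl⟩
        have hdist : Distant (pt R (t*a+c) (t*b+d)) (pt R a b) := ⟨_, _, a, b, rfl, rfl, hAU⟩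
        obtain ⟨a', b', c', d', hx', hq', hU'⟩ := hpar _ hxP hdist
        obtain ⟨u, hu, ha', hb'⟩ := pt_eq_unit hadm (admissible_of_row0 hU') hx'
        obtain ⟨v, hv, hc', hd'⟩ := pt_eq_unit hef (admissible_of_row1 hU') hq'
        obtain ⟨Uu, hUu⟩ := hu
        obtain ⟨Vv, hVv⟩ := hv
        have h3 := isUnit_row_mul (Units.isUnit Uu⁻¹) (Units.isUnit Vv⁻¹) hU'
        have e1 : (↑Uu⁻¹:R) * a' = t*a+c := by rw [ha', ← hUu, unit_cancel]
        have e2 : (↑Uu⁻¹:R) * b' = t*b+d := by rw [hb', ← hUu, unit_cancel]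
        have e3 : (↑Vv⁻¹:R) * c' = e := by rw [hc', ← hVv, unit_cancel]
        have e4 : (↑Vv⁻¹:R) * d' = f := by rw [hd', ← hVv, unit_cancel]
        rw [e1, e2, e3, e4] at h3
        have e5 : !![t, (1:R); g, h] * M = !![t*a+c, t*b+d; e, f] := by
          rw [hMeta, Matrix.mul_fin_two]
          simp only [one_mul]
          rw [hea, hfb]
        have e6 : !![t, (1:R); g, h] = !![t*a+c, t*b+d; e, f] * N := by
          rw [← e5, mul_assoc, hMeta, hMN, Matrix.mul_one]
        rw [e6]
        exact h3.mul hNu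
      have hunit : ∀ t : R, IsUnit (g - h*t) := by
        intro t
        have hD : IsUnit (!![(1:R), 0; -h, 1] * !![t, (1:R); g, h] * !![(1:R), 0; -t, 1]) :=
          ((isUnit_lowtri (-h)).mul (key t)).mul (isUnit_lowtri (-t))
        have eD : !![(1:R), 0; -h, 1] * !![t, (1:R); g, h] * !![(1:R), 0; -t, 1]
            = !![(0:R), 1; g - h*t, 0] := by
          ext i j
          fin_cases i <;> fin_cases j <;>
            simp [Matrix.mul_apply, Fin.sum_univ_two] <;> noncomm_ring
        exact isUnit_of_antidiag (eD ▸ hD)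
      have hg : IsUnit g := by have := hunit 0; simpa using this
      obtain ⟨G, hG⟩ := hg
      have hmem : -(G.inv * h) ∈ (⊥ : Ideal R).jacobson := by
        rw [Ideal.mem_jacobson_iff]
        intro y
        have h1 : IsUnit (1 + -(G.inv*h)*y) := by
          have h2 : IsUnit (G.inv * (g - h*y)) := (Units.isUnit G⁻¹).mul (hunit y)
          have egg : G.inv * g = 1 := by rw [← hG]; exact G.inv_mul
          have e2 : G.inv * (g - h*y) = 1 + -(G.inv*h)*y := by
            calc G.inv * (g - h*y) = G.inv*g - G.inv*h*y := by noncomm_ring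
            _ = 1 + -(G.inv*h)*y := by rw [egg]; noncomm_ring
          exact e2 ▸ h2
        have h3 : IsUnit (1 + y * -(G.inv*h)) := isUnit_one_add_mul_swap h1
        obtain ⟨W, hW⟩ := h3
        refine ⟨W.inv, ?_⟩
        rw [Ideal.mem_bot]
        have h4 : W.inv * (1 + y * -(G.inv*h)) = 1 := by rw [← hW]; exact W.inv_mul
        calc W.inv * y * -(G.inv*h) + W.inv - 1
            = W.inv * (1 + y * -(G.inv*h)) - 1 := by noncomm_ring
        _ = 0 := by rw [h4, sub_self]
      rw [hJ, Ideal.mem_bot, neg_eq_zero] at hmem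
      have hh0 : h = 0 := by
        have hgi : g * G.inv = 1 := by rw [← hG]; exact G.mul_inv
        calc h = (g * G.inv) * h := by rw [hgi, one_mul]
        _ = g * (G.inv * h) := by rw [mul_assoc]
        _ = 0 := by rw [hmem, mul_zero]
      rw [hh0, zero_mul, add_zero] at hea hfb
      rw [← hea, ← hfb]
      exact (pt_unit_mul ⟨G, hG⟩).symm
    · rintro rfl
      intro x hx hd
      exact hd
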